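/- The degree-2 component of the apolarity annihilator of the nodal cubic y_1^3 + y_1^2 y_3 + y_2^2 y_3 in C[x_1,x_2,x_3] is spanned by x_1² − x_2² − 3x_1x_3, x_1x_2, x_3², and these three quadrics have no common zero in C^3 other than the origin. -/

import Mathlib

open MvPolynomial

noncomputable section

lemma pd_comm {n : ℕ} (i j : Fin n) (p : MvPolynomial (Fin n) ℂ) :
    pderiv i (pderiv j p) = pderiv j (pderiv i p) := by
  classical
  induction p using MvPolynomial.induction_on' with
  | monomial s a =>
    rcases eq_or_ne i j with rfl | hij
    · rfl
    · have e1 : (s - Finsupp.single j 1 : Fin n →₀ ℕ) i = s i := by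
        simp [Finsupp.sub_apply, Finsupp.single_apply, (Ne.symm hij)]
      have e2 : (s - Finsupp.single i 1 : Fin n →₀ ℕ) j = s j := by
        simp [Finsupp.sub_apply, Finsupp.single_apply, hij]
      rw [pderiv_monomial, pderiv_monomial, pderiv_monomial, pderiv_monomial, e1, e2,
        tsub_right_comm]
      ring_nf
  | add p q hp hq => simp [map_add, hp, hq]

lemma pdE_comm {n : ℕ} (i j : Fin n) :
    Commute ((pderiv i : Derivation ℂ (MvPolynomial (Fin n) ℂ) _).toLinearMap)
      ((pderiv j : Derivation ℂ (MvPolynomial (Fin n) ℂ) _).toLinearMap) := by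
  apply LinearMap.ext
  intro p
  exact pd_comm i j p

/-- The differential operator `∂^m` on polynomials. -/
def dOp {n : ℕ} (m : Fin n →₀ ℕ) : Module.End ℂ (MvPolynomial (Fin n) ℂ) :=
  Finset.univ.noncommProd
    (fun i => ((pderiv i : Derivation ℂ (MvPolynomial (Fin n) ℂ) _).toLinearMap) ^ (m i))
    (fun i _ j _ _ => (pdE_comm i j).pow_pow _ _)

lemma dOp_add {n : ℕ} (a b : Fin n →₀ ℕ) : dOp (a + b) = dOp a * dOp b := by
  classical
  unfold dOp
  refine Eq.trans ?_ (Finset.noncommProd_mul_distrib _ _ ?_ ?_ ?_)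
  · apply Finset.noncommProd_congr rfl
    intro i _
    simp [Finsupp.add_apply, pow_add]
  all_goals exact fun i _ j _ _ => (pdE_comm i j).pow_pow _ _

/-- The apolarity action of `ℂ[x_1,…,x_n]` on `ℂ[y_1,…,y_n]` (both realized as
`MvPolynomial (Fin n) ℂ`), as an algebra homomorphism into endomorphisms. -/
def diamondHom {n : ℕ} :
    MvPolynomial (Fin n) ℂ →ₐ[ℂ] Module.End ℂ (MvPolynomial (Fin n) ℂ) :=
  AddMonoidAlgebra.lift ℂ _ (Fin n →₀ ℕ)
    { toFun := fun m => dOp (Multiplicative.toAdd m)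
      map_one' := by
        simp only [toAdd_one, dOp]
        apply Finset.noncommProd_eq_pow_card (m := 1) _ _ _ _ |>.trans (one_pow _)
        intro i _
        simp
      map_mul' := fun a b => by
        simpa using dOp_add (Multiplicative.toAdd a) (Multiplicative.toAdd b) }

/-- `h ⋄ F` : the result of applying the differential operator `h(∂/∂y₁,…,∂/∂yₙ)` to `F`. -/
def diamond {n : ℕ} (h F : MvPolynomial (Fin n) ℂ) : MvPolynomial (Fin n) ℂ :=
  diamondHom h F

/-- The apolarity annihilator ideal `F^⊥ = {h : h ⋄ F = 0}`. -/
def perpIdeal {n : ℕ} (F : MvPolynomial (Fin n) ℂ) : Ideal (MvPolynomial (Fin n) ℂ) where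
  carrier := {h | diamond h F = 0}
  zero_mem' := by simp [diamond]
  add_mem' := by
    intro a b ha hb
    simp only [Set.mem_setOf_eq, diamond, map_add, LinearMap.add_apply] at *
    rw [ha, hb, add_zero]
  smul_mem' := by
    intro c x hx
    simp only [Set.mem_setOf_eq, diamond, smul_eq_mul, map_mul, Module.End.mul_apply] at *
    rw [hx, map_zero]


lemma dOp_single {n : ℕ} (i : Fin n) (k : ℕ) :
    dOp (Finsupp.single i k) = ((pderiv i : Derivation ℂ (MvPolynomial (Fin n) ℂ) _).toLinearMap) ^ k := by
  classical
  rw [dOp]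
  rw [Finset.noncommProd_congr (Finset.insert_erase (Finset.mem_univ i)).symm
    (fun x _ => rfl) (fun a _ b _ _ => (pdE_comm a b).pow_pow _ _)]
  erw [Finset.noncommProd_insert_of_notMem _ _ _ _ (Finset.notMem_erase _ _),
    Finset.noncommProd_eq_pow_card (Finset.univ.erase i) _ _ 1]
  · simp
  · intro j hj
    have : j ≠ i := (Finset.mem_erase.mp hj).1
    simp [Finsupp.single_apply, this.symm]

lemma diamond_X {n : ℕ} (i : Fin n) (F : MvPolynomial (Fin n) ℂ) :
    diamond (X i) F = pderiv i F := by
  rw [diamond, X, monomial]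
  rw [diamondHom]
  erw [AddMonoidAlgebra.lift_single]
  simp [dOp_single]

lemma diamond_mul {n : ℕ} (p q F : MvPolynomial (Fin n) ℂ) :
    diamond (p * q) F = diamond p (diamond q F) := by
  simp [diamond, map_mul]

lemma diamond_add {n : ℕ} (p q F : MvPolynomial (Fin n) ℂ) :
    diamond (p + q) F = diamond p F + diamond q F := by
  simp [diamond, map_add]

lemma diamond_sub {n : ℕ} (p q F : MvPolynomial (Fin n) ℂ) :
    diamond (p - q) F = diamond p F - diamond q F := by
  simp [diamond, map_sub]

lemma diamond_smul {n : ℕ} (c : ℂ) (p F : MvPolynomial (Fin n) ℂ) :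
    diamond (C c * p) F = c • diamond p F := by
  simp only [diamond, map_mul]
  have : diamondHom (n := n) (C c) = algebraMap ℂ _ c := by
    rw [← algebraMap_eq]; exact AlgHom.commutes _ c
  rw [this]
  simp [Module.algebraMap_end_apply]
lemma diamond_sq {n : ℕ} (p F : MvPolynomial (Fin n) ℂ) :
    diamond (p ^ 2) F = diamond p (diamond p F) := by
  rw [sq, diamond_mul]

lemma diamond_one {n : ℕ} (F : MvPolynomial (Fin n) ℂ) : diamond 1 F = F := by
  simp [diamond, map_one]

lemma diamond_Cc {n : ℕ} (c : ℂ) (F : MvPolynomial (Fin n) ℂ) :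
    diamond (C c) F = c • F := by
  have := diamond_smul c 1 F
  simpa [diamond_one] using this

lemma diamond_ofNat {n : ℕ} (k : ℕ) [k.AtLeastTwo] (F : MvPolynomial (Fin n) ℂ) :
    diamond (OfNat.ofNat k : MvPolynomial (Fin n) ℂ) F = (OfNat.ofNat k : ℂ) • F := by
  rw [← map_ofNat (C : ℂ →+* MvPolynomial (Fin n) ℂ) k, diamond_Cc]

lemma pderiv_ofNat {n : ℕ} (i : Fin n) (k : ℕ) [k.AtLeastTwo] :
    pderiv i (OfNat.ofNat k : MvPolynomial (Fin n) ℂ) = 0 := by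
  rw [← map_ofNat (C : ℂ →+* MvPolynomial (Fin n) ℂ) k, pderiv_C]

@[simp] lemma pderiv_two {n : ℕ} (i : Fin n) :
    pderiv i (2 : MvPolynomial (Fin n) ℂ) = 0 := pderiv_ofNat i 2

@[simp] lemma pderiv_three {n : ℕ} (i : Fin n) :
    pderiv i (3 : MvPolynomial (Fin n) ℂ) = 0 := pderiv_ofNat i 3

@[simp] lemma diamond_three {n : ℕ} (F : MvPolynomial (Fin n) ℂ) :
    diamond (3 : MvPolynomial (Fin n) ℂ) F = (3 : ℂ) • F := diamond_ofNat 3 F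
lemma diamond_g1 : diamond (X 0 ^ 2 - X 1 ^ 2 - 3 * (X 0 * X 2) : MvPolynomial (Fin 3) ℂ)
    (X 0 ^ 3 + X 0 ^ 2 * X 2 + X 1 ^ 2 * X 2) = 0 := by
  simp only [diamond_sub, diamond_sq, diamond_mul, diamond_three, diamond_X, diamond_add]
  simp [pderiv_X, pderiv_mul, pderiv_pow, smul_eq_C_mul, map_ofNat]
lemma diamond_g2 : diamond (X 0 * X 1 : MvPolynomial (Fin 3) ℂ)
    (X 0 ^ 3 + X 0 ^ 2 * X 2 + X 1 ^ 2 * X 2) = 0 := by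
  simp only [diamond_sub, diamond_sq, diamond_mul, diamond_three, diamond_X, diamond_add]
  simp [pderiv_X, pderiv_mul, pderiv_pow, smul_eq_C_mul, map_ofNat]
lemma diamond_g3 : diamond (X 2 ^ 2 : MvPolynomial (Fin 3) ℂ)
    (X 0 ^ 3 + X 0 ^ 2 * X 2 + X 1 ^ 2 * X 2) = 0 := by
  simp only [diamond_sub, diamond_sq, diamond_mul, diamond_three, diamond_X, diamond_add]
  simp [pderiv_X, pderiv_mul, pderiv_pow, smul_eq_C_mul, map_ofNat]
example : (Finsupp.single (0:Fin 3) 2) ≠ (Finsupp.single 1 2 : Fin 3 →₀ ℕ) := by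
  simp [Finsupp.ext_iff, Fin.forall_fin_succ, Finsupp.single_apply]

lemma deg2_cases (m : Fin 3 →₀ ℕ) (hm : m.sum (fun _ e => e) = 2) :
    m = Finsupp.single 0 2 ∨ m = Finsupp.single 1 2 ∨ m = Finsupp.single 2 2 ∨
    m = Finsupp.single 0 1 + Finsupp.single 1 1 ∨
    m = Finsupp.single 0 1 + Finsupp.single 2 1 ∨
    m = Finsupp.single 1 1 + Finsupp.single 2 1 := by
  have hs : m 0 + m 1 + m 2 = 2 := by
    rw [Finsupp.sum_fintype _ _ (fun _ => rfl)] at hm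
    simpa [Fin.sum_univ_three] using hm
  clear hm
  have h0 : m 0 ≤ 2 := by omega
  have h1 : m 1 ≤ 2 := by omega
  have h2 : m 2 ≤ 2 := by omega
  interval_cases hh0 : m 0 <;> interval_cases hh1 : m 1 <;> interval_cases hh2 : m 2 <;>
    solve
    | (left; ext i; fin_cases i <;> simp_all [Finsupp.single_apply])
    | (right; left; ext i; fin_cases i <;> simp_all [Finsupp.single_apply])
    | (right; right; left; ext i; fin_cases i <;> simp_all [Finsupp.single_apply])
    | (right; right; right; left; ext i; fin_cases i <;> simp_all [Finsupp.single_apply])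
    | (right; right; right; right; left; ext i; fin_cases i <;> simp_all [Finsupp.single_apply])
    | (right; right; right; right; right; ext i; fin_cases i <;> simp_all [Finsupp.single_apply])
lemma degree_eq_sum3 (m : Fin 3 →₀ ℕ) : m.degree = m 0 + m 1 + m 2 := by
  rw [Finsupp.degree_apply, Finset.sum_subset (Finset.subset_univ m.support)]
  · simp [Fin.sum_univ_three]
  · intro i _ hi
    simpa using Finsupp.notMem_support_iff.mp hi

lemma homog2_decomp (h : MvPolynomial (Fin 3) ℂ) (hh : h.IsHomogeneous 2) :
    h = monomial (Finsupp.single 0 2) (coeff (Finsupp.single 0 2) h)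
      + monomial (Finsupp.single 1 2) (coeff (Finsupp.single 1 2) h)
      + monomial (Finsupp.single 2 2) (coeff (Finsupp.single 2 2) h)
      + monomial (Finsupp.single 0 1 + Finsupp.single 1 1)
          (coeff (Finsupp.single 0 1 + Finsupp.single 1 1) h)
      + monomial (Finsupp.single 0 1 + Finsupp.single 2 1)
          (coeff (Finsupp.single 0 1 + Finsupp.single 2 1) h)
      + monomial (Finsupp.single 1 1 + Finsupp.single 2 1)
          (coeff (Finsupp.single 1 1 + Finsupp.single 2 1) h) := by
  apply MvPolynomial.ext
  intro m
  simp only [coeff_add, coeff_monomial]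
  by_cases hm : m.sum (fun _ e => e) = 2
  · rcases deg2_cases m hm with rfl | rfl | rfl | rfl | rfl | rfl <;>
      simp [Finsupp.ext_iff, Fin.forall_fin_succ, Finsupp.single_apply, Finsupp.add_apply]
  · have hdeg : m.degree ≠ 2 := by
      rw [degree_eq_sum3]
      intro hc
      apply hm
      rw [Finsupp.sum_fintype _ _ (fun _ => rfl), Fin.sum_univ_three]
      exact hc
    rw [hh.coeff_eq_zero hdeg]
    have key : ∀ s : Fin 3 →₀ ℕ, s.degree = 2 → ¬ (s = m) := by
      rintro s hs rfl; exact hdeg hs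
    rw [if_neg (key _ (by simp [degree_eq_sum3, Finsupp.single_apply])),
      if_neg (key _ (by simp [degree_eq_sum3, Finsupp.single_apply])),
      if_neg (key _ (by simp [degree_eq_sum3, Finsupp.single_apply])),
      if_neg (key _ (by simp [degree_eq_sum3, Finsupp.single_apply, Finsupp.add_apply])),
      if_neg (key _ (by simp [degree_eq_sum3, Finsupp.single_apply, Finsupp.add_apply])),
      if_neg (key _ (by simp [degree_eq_sum3, Finsupp.single_apply, Finsupp.add_apply]))]
    simp
lemma mon_sq (i : Fin 3) (a : ℂ) :
    (monomial (Finsupp.single i 2) a : MvPolynomial (Fin 3) ℂ) = C a * X i ^ 2 := by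
  rw [X_pow_eq_monomial, C_mul_monomial, mul_one]

lemma mon_mul (i j : Fin 3) (a : ℂ) :
    (monomial (Finsupp.single i 1 + Finsupp.single j 1) a : MvPolynomial (Fin 3) ℂ)
      = C a * (X i * X j) := by
  rw [X, X, monomial_mul, C_mul_monomial]
  simp

abbrev Fcub : MvPolynomial (Fin 3) ℂ := X 0 ^ 3 + X 0 ^ 2 * X 2 + X 1 ^ 2 * X 2

lemma D1 (a : ℂ) : diamond (C a * X 0 ^ 2) Fcub = C (6*a) * X 0 + C (2*a) * X 2 := by
  rw [diamond_smul, diamond_sq]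
  simp [diamond_X, pderiv_X, pderiv_mul, pderiv_pow, smul_eq_C_mul, map_ofNat]
  ring

lemma D2 (b : ℂ) : diamond (C b * X 1 ^ 2) Fcub = C (2*b) * X 2 := by
  rw [diamond_smul, diamond_sq]
  simp [diamond_X, pderiv_X, pderiv_mul, pderiv_pow, smul_eq_C_mul, map_ofNat, map_mul]
  ring

lemma D3 (c : ℂ) : diamond (C c * X 2 ^ 2) Fcub = 0 := by
  rw [diamond_smul, diamond_sq]
  simp [diamond_X, pderiv_X, pderiv_mul, pderiv_pow, smul_eq_C_mul, map_ofNat]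

lemma D4 (d : ℂ) : diamond (C d * (X 0 * X 1)) Fcub = 0 := by
  rw [diamond_smul, diamond_mul]
  simp [diamond_X, pderiv_X, pderiv_mul, pderiv_pow, smul_eq_C_mul, map_ofNat]

lemma D5 (e : ℂ) : diamond (C e * (X 0 * X 2)) Fcub = C (2*e) * X 0 := by
  rw [diamond_smul, diamond_mul]
  simp [diamond_X, pderiv_X, pderiv_mul, pderiv_pow, smul_eq_C_mul, map_ofNat, map_mul]
  ring

lemma D6 (f : ℂ) : diamond (C f * (X 1 * X 2)) Fcub = C (2*f) * X 1 := by
  rw [diamond_smul, diamond_mul]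
  simp [diamond_X, pderiv_X, pderiv_mul, pderiv_pow, smul_eq_C_mul, map_ofNat, map_mul]
  ring
lemma hgX2 (i : Fin 3) : (X i ^ 2 : MvPolynomial (Fin 3) ℂ).IsHomogeneous 2 := by
  simpa using (isHomogeneous_X ℂ i).pow 2

lemma hg1 : (X 0 ^ 2 - X 1 ^ 2 - 3 * (X 0 * X 2) : MvPolynomial (Fin 3) ℂ).IsHomogeneous 2 := by
  apply IsHomogeneous.sub (IsHomogeneous.sub (hgX2 0) (hgX2 1))
  rw [← map_ofNat (C : ℂ →+* MvPolynomial (Fin 3) ℂ) 3]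
  simpa using (isHomogeneous_C _ (3:ℂ)).mul ((isHomogeneous_X ℂ 0).mul (isHomogeneous_X ℂ 2))

lemma hg2 : (X 0 * X 1 : MvPolynomial (Fin 3) ℂ).IsHomogeneous 2 := by
  simpa using (isHomogeneous_X ℂ 0).mul (isHomogeneous_X ℂ 1)
/-- The degree-2 component of the apolarity annihilator of the nodal cubic
`y₁³ + y₁²y₃ + y₂²y₃` is spanned by `x₁² − x₂² − 3x₁x₃, x₁x₂, x₃²`, and these three quadrics
have no common zero in `ℂ³` other than the origin. -/
theorem nodal_cubic_perp_quadrics :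
    (∀ h : MvPolynomial (Fin 3) ℂ,
      (h ∈ homogeneousSubmodule (Fin 3) ℂ 2 ∧
          diamond h (X 0 ^ 3 + X 0 ^ 2 * X 2 + X 1 ^ 2 * X 2) = 0) ↔
        h ∈ Submodule.span ℂ
          ({X 0 ^ 2 - X 1 ^ 2 - 3 * (X 0 * X 2), X 0 * X 1, X 2 ^ 2} :
            Set (MvPolynomial (Fin 3) ℂ))) ∧
    ∀ x : Fin 3 → ℂ,
      MvPolynomial.eval x (X 0 ^ 2 - X 1 ^ 2 - 3 * (X 0 * X 2) : MvPolynomial (Fin 3) ℂ) = 0 →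
      MvPolynomial.eval x (X 0 * X 1 : MvPolynomial (Fin 3) ℂ) = 0 →
      MvPolynomial.eval x (X 2 ^ 2 : MvPolynomial (Fin 3) ℂ) = 0 → x = 0 := by
  constructor
  · intro h
    constructor
    · rintro ⟨hmem, hdia⟩
      have hh : h.IsHomogeneous 2 := hmem
      have hd := homog2_decomp h hh
      rw [mon_sq, mon_sq, mon_sq, mon_mul, mon_mul, mon_mul] at hd
      set a := coeff (Finsupp.single 0 2) h with ha
      set b := coeff (Finsupp.single 1 2) h with hbdef
      set c := coeff (Finsupp.single 2 2) h with hc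
      set d := coeff (Finsupp.single 0 1 + Finsupp.single 1 1) h with hddef
      set e := coeff (Finsupp.single 0 1 + Finsupp.single 2 1) h with hedef
      set f := coeff (Finsupp.single 1 1 + Finsupp.single 2 1) h with hfdef
      rw [hd] at hdia
      simp only [diamond_add, D1, D2, D3, D4, D5, D6, add_zero] at hdia
      have e0 := congrArg (coeff (Finsupp.single 0 1)) hdia
      have e1 := congrArg (coeff (Finsupp.single 1 1)) hdia
      have e2 := congrArg (coeff (Finsupp.single 2 1)) hdia
      simp only [coeff_add, coeff_C_mul, coeff_X', coeff_zero] at e0 e1 e2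
      simp only [Finsupp.single_eq_single_iff, if_true] at e0 e1 e2
      norm_num [Fin.ext_iff] at e0 e1 e2
      have hb : b = -a := by linear_combination e2 / 2
      have he : e = -3 * a := by linear_combination e0 / 2
      have hf : f = 0 := e1
      rw [hb, he, hf] at hd
      have hrep : h = a • (X 0 ^ 2 - X 1 ^ 2 - 3 * (X 0 * X 2)) + d • (X 0 * X 1)
          + c • (X 2 ^ 2 : MvPolynomial (Fin 3) ℂ) := by
        rw [hd, smul_eq_C_mul, smul_eq_C_mul, smul_eq_C_mul]
        simp only [map_neg, map_mul, map_ofNat, map_zero]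
        ring
      rw [hrep]
      refine Submodule.add_mem _ (Submodule.add_mem _ ?_ ?_) ?_ <;>
        apply Submodule.smul_mem <;> apply Submodule.subset_span <;> simp
    · intro hsp
      have hsub1 : Submodule.span ℂ
          ({X 0 ^ 2 - X 1 ^ 2 - 3 * (X 0 * X 2), X 0 * X 1, X 2 ^ 2} :
            Set (MvPolynomial (Fin 3) ℂ)) ≤ homogeneousSubmodule (Fin 3) ℂ 2 := by
        rw [Submodule.span_le]
        rintro g hg
        simp only [Set.mem_insert_iff, Set.mem_singleton_iff] at hg
        rcases hg with rfl | rfl | rfl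
        · exact hg1
        · exact hg2
        · exact hgX2 2
      refine ⟨hsub1 hsp, ?_⟩
      refine Submodule.span_induction ?_ ?_ ?_ ?_ hsp
      · rintro g hg
        simp only [Set.mem_insert_iff, Set.mem_singleton_iff] at hg
        rcases hg with rfl | rfl | rfl
        · exact diamond_g1
        · exact diamond_g2
        · exact diamond_g3
      · simp [diamond]
      · intro p q _ _ hp hq
        rw [diamond_add, hp, hq, add_zero]
      · intro t p _ hp
        rw [smul_eq_C_mul, diamond_smul, hp, smul_zero]
  · intro x h1 h2 h3
    simp only [eval_sub, eval_mul, eval_pow, eval_X, eval_ofNat] at h1 h2 h3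
    have hx2 : x 2 = 0 := by
      have := pow_eq_zero_iff (n := 2) (by norm_num) |>.mp h3
      exact this
    have h01 : x 0 = 0 ∧ x 1 = 0 := by
      rcases mul_eq_zero.mp h2 with h0 | h0
      · constructor
        · exact h0
        · have : x 1 ^ 2 = 0 := by rw [h0, hx2] at h1; linear_combination -h1
          exact pow_eq_zero_iff (n := 2) (by norm_num) |>.mp this
      · constructor
        · have : x 0 ^ 2 = 0 := by rw [h0, hx2] at h1; linear_combination h1
          exact pow_eq_zero_iff (n := 2) (by norm_num) |>.mp this
        · exact h0
    funext i
    fin_cases i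
    · exact h01.1
    · exact h01.2
    · exact hx2

end
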